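/- Let X be a vector space and T = c·P₂(f) : X⁽²⁾ → X⁽²⁾ with c ≠ 0 and f : X → X linear. If T is Drazin invertible with index k, then f is Drazin invertible with Ind(f) ≤ k, and T^D = (1/c)·P₂(f^D). Consequently, if T is rank-one non-increasing and Drazin invertible, then T^D is rank-one non-increasing. -/

import Mathlib

open TensorProduct

/-- The second symmetric product space `X⁽²⁾`: the symmetric tensors in `X ⊗ X`. -/
noncomputable def sym2Space (X : Type*) [AddCommGroup X] [Module ℝ X] :
    Submodule ℝ (X ⊗[ℝ] X) :=
  LinearMap.eqLocus (TensorProduct.comm ℝ X X).toLinearMap LinearMap.id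

lemma tmul_self_mem_sym2Space {X : Type*} [AddCommGroup X] [Module ℝ X] (x : X) :
    x ⊗ₜ[ℝ] x ∈ sym2Space X := by
  simp [sym2Space, LinearMap.mem_eqLocus]

/-- The decomposable element `x ⊗ x` viewed in `X⁽²⁾`. -/
noncomputable def sq2 {X : Type*} [AddCommGroup X] [Module ℝ X] (x : X) : sym2Space X :=
  ⟨x ⊗ₜ[ℝ] x, tmul_self_mem_sym2Space x⟩

/-- The Drazin equations `TᵏST = Tᵏ`, `STS = S`, `TS = ST`. -/
def DrazinTriple {M : Type*} [AddCommGroup M] [Module ℝ M]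
    (T S : Module.End ℝ M) (k : ℕ) : Prop :=
  T ^ k * S * T = T ^ k ∧ S * T * S = S ∧ T * S = S * T

/-- An element of `X⁽²⁾` of rank at most one. -/
def IsDecomp {X : Type*} [AddCommGroup X] [Module ℝ X]
    (A : sym2Space X) : Prop :=
  ∃ (x : X) (l : ℝ), (A : X ⊗[ℝ] X) = l • (x ⊗ₜ[ℝ] x)


section DZ
variable {M : Type*} [Monoid M]

private lemma dz_pow_mul {a b : M} {k : ℕ} (h1 : a ^ k * b * a = a ^ k) (h3 : a * b = b * a)
    (m : ℕ) (hm : k ≤ m) : a ^ (m + 1) * b = a ^ m := by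
  obtain ⟨d, rfl⟩ : ∃ d, m = d + k := ⟨m - k, by omega⟩
  have e1 : a ^ (k + 1) * b = a ^ k := by
    calc a ^ (k + 1) * b = a ^ k * (a * b) := by rw [pow_succ, mul_assoc]
    _ = a ^ k * (b * a) := by rw [h3]
    _ = a ^ k * b * a := by rw [mul_assoc]
    _ = a ^ k := h1
  calc a ^ (d + k + 1) * b = a ^ d * (a ^ (k + 1) * b) := by
        rw [← mul_assoc, ← pow_add]
        rfl
    _ = a ^ d * a ^ k := by rw [e1]
    _ = a ^ (d + k) := by rw [← pow_add]

private lemma dz_pow_pow {a b : M} {k : ℕ} (h1 : a ^ k * b * a = a ^ k) (h3 : a * b = b * a)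
    {p : ℕ} (hp : k ≤ p) (n : ℕ) : a ^ (p + n) * b ^ n = a ^ p := by
  induction n with
  | zero => simp
  | succ n ih =>
      calc a ^ (p + n + 1) * b ^ (n + 1) = (a ^ (p + n + 1) * b) * b ^ n := by
            rw [pow_succ' b n, ← mul_assoc]
      _ = a ^ (p + n) * b ^ n := by rw [dz_pow_mul h1 h3 (p + n) (by omega)]
      _ = a ^ p := ih

private lemma dz_idem {a b : M} (h2 : b * a * b = b) (n : ℕ) : (a * b) ^ (n + 1) = a * b := by
  induction n with
  | zero => simp
  | succ n ih =>
      calc (a * b) ^ (n + 2) = (a * b) * (a * b) ^ (n + 1) := by rw [pow_succ']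
      _ = (a * b) * (a * b) := by rw [ih]
      _ = a * (b * a * b) := by rw [mul_assoc, ← mul_assoc b a b]
      _ = a * b := by rw [h2]

lemma drazin_unique_monoid {a b b' : M} {k k' : ℕ}
    (h1 : a ^ k * b * a = a ^ k) (h2 : b * a * b = b) (h3 : a * b = b * a)
    (h1' : a ^ k' * b' * a = a ^ k') (h2' : b' * a * b' = b') (h3' : a * b' = b' * a) :
    b = b' := by
  set n := k + k' + 1 with hn
  have cb : Commute a b := h3
  have cb' : Commute a b' := h3'
  have hu : a ^ n * b ^ n = (a * b) ^ n := (cb.mul_pow n).symm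
  have hv : a ^ n * b' ^ n = (a * b') ^ n := (cb'.mul_pow n).symm
  have hu2 : b ^ n * a ^ n = (a * b) ^ n := by rw [← hu, ((cb.pow_pow n n).symm).eq]
  have e1' : a ^ n * (a ^ n * b' ^ n) = a ^ n := by
    rw [← mul_assoc, ← pow_add]; exact dz_pow_pow h1' h3' (by omega) n
  have e1 : a ^ n * (a ^ n * b ^ n) = a ^ n := by
    rw [← mul_assoc, ← pow_add]; exact dz_pow_pow h1 h3 (by omega) n
  have e2 : (a ^ n * b ^ n) * a ^ n = a ^ n := by
    rw [mul_assoc, ((cb.pow_pow n n).symm).eq]; exact e1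
  have uv : (a * b) ^ n = (a * b) ^ n * (a * b') ^ n := by
    calc (a * b) ^ n = b ^ n * a ^ n := hu2.symm
    _ = b ^ n * (a ^ n * (a ^ n * b' ^ n)) := by rw [e1']
    _ = (b ^ n * a ^ n) * (a ^ n * b' ^ n) := by rw [mul_assoc]
    _ = (a * b) ^ n * (a * b') ^ n := by rw [hu2, hv]
  have vv : (a * b') ^ n = (a * b) ^ n * (a * b') ^ n := by
    calc (a * b') ^ n = a ^ n * b' ^ n := hv.symm
    _ = ((a ^ n * b ^ n) * a ^ n) * b' ^ n := by rw [e2]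
    _ = (a ^ n * b ^ n) * (a ^ n * b' ^ n) := by rw [mul_assoc]
    _ = (a * b) ^ n * (a * b') ^ n := by rw [hu, hv]
  have hab : a * b = a * b' := by
    have i1 : (a * b) ^ n = a * b := dz_idem h2 (k + k')
    have i2 : (a * b') ^ n = a * b' := dz_idem h2' (k + k')
    rw [← i1, ← i2, uv, ← vv]
  calc b = b * (a * b) := by rw [← mul_assoc, h2]
  _ = b * (a * b') := by rw [hab]
  _ = (b * a) * b' := by rw [← mul_assoc]
  _ = (a * b) * b' := by rw [← h3]
  _ = (a * b') * b' := by rw [hab]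
  _ = (b' * a) * b' := by rw [h3']
  _ = b' := h2'

end DZ

section Helpers
variable {X : Type*} [AddCommGroup X] [Module ℝ X]

lemma sq2_coe (x : X) : ((sq2 x : sym2Space X) : X ⊗[ℝ] X) = x ⊗ₜ[ℝ] x := rfl

lemma sq2_zero : (sq2 (0 : X)) = 0 := Subtype.ext (by simp [sq2])

lemma tmul_self_eq_zero {y : X} (h : y ⊗ₜ[ℝ] y = 0) : y = 0 := by
  rw [← Module.forall_dual_apply_eq_zero_iff ℝ y]
  intro φ
  have h2 : (TensorProduct.map φ φ) (y ⊗ₜ[ℝ] y) = 0 := by rw [h, map_zero]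
  rw [TensorProduct.map_tmul] at h2
  have h3 : (TensorProduct.lid ℝ ℝ) ((φ y) ⊗ₜ[ℝ] (φ y)) = 0 := by
    rw [h2]; exact map_zero (TensorProduct.lid ℝ ℝ).toLinearMap
  rw [TensorProduct.lid_tmul, smul_eq_mul] at h3
  exact mul_self_eq_zero.mp h3

lemma span_sq2 : Submodule.span ℝ (Set.range (sq2 : X → sym2Space X)) = ⊤ := by
  rw [eq_top_iff]
  intro A _
  set Q : Submodule ℝ (X ⊗[ℝ] X) :=
    Submodule.map (sym2Space X).subtype
      (Submodule.span ℝ (Set.range (sq2 : X → sym2Space X))) with hQ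
  have hsq : ∀ x : X, x ⊗ₜ[ℝ] x ∈ Q := fun x =>
    ⟨sq2 x, Submodule.subset_span ⟨x, rfl⟩, rfl⟩
  have key : ∀ t : X ⊗[ℝ] X, t + (TensorProduct.comm ℝ X X) t ∈ Q := by
    intro t
    induction t with
    | zero => simp
    | tmul x y =>
        have hid : x ⊗ₜ[ℝ] y + y ⊗ₜ[ℝ] x
            = (x + y) ⊗ₜ[ℝ] (x + y) - x ⊗ₜ[ℝ] x - y ⊗ₜ[ℝ] y := by
          simp only [TensorProduct.tmul_add, TensorProduct.add_tmul]
          abel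
        rw [TensorProduct.comm_tmul, hid]
        exact Q.sub_mem (Q.sub_mem (hsq _) (hsq _)) (hsq _)
    | add t u ht hu =>
        have := Q.add_mem ht hu
        rw [map_add]
        convert this using 1
        abel
  have hAsym : (TensorProduct.comm ℝ X X) (A : X ⊗[ℝ] X) = (A : X ⊗[ℝ] X) := A.2
  have h1 : (A : X ⊗[ℝ] X) + (A : X ⊗[ℝ] X) ∈ Q := by
    have := key (A : X ⊗[ℝ] X)
    rwa [hAsym] at this
  have h2 : (A : X ⊗[ℝ] X) ∈ Q := by
    have : (A : X ⊗[ℝ] X) = (2⁻¹ : ℝ) • ((A : X ⊗[ℝ] X) + (A : X ⊗[ℝ] X)) := by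
      rw [← two_smul ℝ, smul_smul]
      norm_num
    rw [this]
    exact Q.smul_mem _ h1
  obtain ⟨B, hB, hBA⟩ := h2
  have : B = A := Subtype.ext hBA
  exact this ▸ hB

end Helpers

section Construct
variable {X : Type*} [AddCommGroup X] [Module ℝ X]

lemma dz_kerN (f : Module.End ℝ X) (k : ℕ)
    (hker1 : ∀ x : X, (f ^ (k + 1)) x = 0 → (f ^ k) x = 0) :
    ∀ n, ∀ x : X, (f ^ (k + n)) x = 0 → (f ^ k) x = 0 := by
  intro n
  induction n with
  | zero => intro x h; exact h
  | succ n ih =>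
      intro x h
      have h' : (f ^ (k + 1)) ((f ^ n) x) = 0 := by
        rw [← Module.End.mul_apply, ← pow_add]
        rw [show k + 1 + n = k + (n + 1) by omega]
        exact h
      have h2 : (f ^ (k + n)) x = 0 := by
        rw [show k + n = k + n from rfl, pow_add, Module.End.mul_apply]
        exact hker1 _ h'
      exact ih x h2

lemma dz_rangeN (f : Module.End ℝ X) (k : ℕ)
    (hrange1 : ∀ x : X, ∃ y, (f ^ (k + 1)) y = (f ^ k) x) :
    ∀ n, ∀ x : X, ∃ y, (f ^ (k + n)) y = (f ^ k) x := by
  intro n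
  induction n with
  | zero => intro x; exact ⟨x, rfl⟩
  | succ n ih =>
      intro x
      obtain ⟨y, hy⟩ := ih x
      obtain ⟨z, hz⟩ := hrange1 y
      refine ⟨z, ?_⟩
      calc (f ^ (k + (n + 1))) z = (f ^ n) ((f ^ (k + 1)) z) := by
            rw [← Module.End.mul_apply, ← pow_add]
            congr 2
            omega
      _ = (f ^ n) ((f ^ k) y) := by rw [hz]
      _ = (f ^ (k + n)) y := by rw [← Module.End.mul_apply, ← pow_add, add_comm n k]
      _ = (f ^ k) x := hy

lemma drazin_of_stable (f : Module.End ℝ X) (k : ℕ)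
    (hker1 : ∀ x : X, (f ^ (k + 1)) x = 0 → (f ^ k) x = 0)
    (hrange1 : ∀ x : X, ∃ y, (f ^ (k + 1)) y = (f ^ k) x) :
    ∃ s, DrazinTriple f s k := by
  classical
  have hkerN := dz_kerN f k hker1
  have hrangeN := dz_rangeN f k hrange1
  set K := LinearMap.ker (f ^ k) with hK
  set R := LinearMap.range (f ^ k) with hR
  have hdis : Disjoint K R := by
    rw [Submodule.disjoint_def]
    intro a haK haR
    obtain ⟨y, hy⟩ := haR
    have h0 : (f ^ (k + k)) y = 0 := by
      rw [pow_add, Module.End.mul_apply, hy]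
      exact LinearMap.mem_ker.mp haK
    have := hkerN k y h0
    rw [hy] at this
    exact this
  have hcod : Codisjoint K R := by
    rw [codisjoint_iff, eq_top_iff]
    intro x _
    rw [Submodule.mem_sup]
    obtain ⟨y, hy⟩ := hrangeN k x
    refine ⟨x - (f ^ k) y, ?_, (f ^ k) y, ⟨y, rfl⟩, by abel⟩
    rw [LinearMap.mem_ker, map_sub, ← Module.End.mul_apply, ← pow_add, hy, sub_self]
  have hcompl : IsCompl K R := ⟨hdis, hcod⟩
  set π := Submodule.projectionOnto R K hcompl.symm with hπ
  have hfR : ∀ a ∈ R, f a ∈ R := by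
    rintro _ ⟨y, rfl⟩
    exact ⟨f y, by rw [← Module.End.mul_apply, ← Module.End.mul_apply, ← pow_succ, ← pow_succ']⟩
  set g : R →ₗ[ℝ] R := f.restrict hfR with hg
  have hgbij : Function.Bijective g := by
    constructor
    · intro u v huv
      have h0 : g (u - v) = 0 := by rw [map_sub, huv, sub_self]
      have h1 : f ((u - v : R) : X) = 0 := by
        have := congrArg (Subtype.val) h0
        rwa [LinearMap.restrict_coe_apply] at this
      obtain ⟨y, hy⟩ := (u - v).2
      have h2 : (f ^ (k + 1)) y = 0 := by
        rw [pow_succ', Module.End.mul_apply, ← Module.End.mul_apply, ← pow_succ']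
        rw [show (f ^ (k+1)) y = f ((f ^ k) y) by rw [pow_succ', Module.End.mul_apply]]
        rw [hy]
        exact h1
      have h3 : (f ^ k) y = 0 := hkerN 1 y h2
      have h4 : ((u - v : R) : X) = 0 := by rw [← hy, h3]
      have : u - v = 0 := Subtype.ext h4
      exact sub_eq_zero.mp this
    · rintro ⟨a, ha⟩
      obtain ⟨y, hy⟩ := ha
      obtain ⟨w, hw⟩ := hrangeN 1 y
      refine ⟨⟨(f ^ k) w, ⟨w, rfl⟩⟩, ?_⟩
      apply Subtype.ext
      rw [LinearMap.restrict_coe_apply]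
      show f ((f ^ k) w) = a
      rw [← Module.End.mul_apply, ← pow_succ', hw, hy]
  set e := LinearEquiv.ofBijective g hgbij with he
  set s : Module.End ℝ X := R.subtype ∘ₗ (e.symm : R →ₗ[ℝ] R) ∘ₗ π with hs
  have hsx : ∀ x : X, s x = ((e.symm (π x) : R) : X) := fun x => rfl
  have hπR : ∀ w : R, π (w : X) = w := Submodule.linearProjOfIsCompl_apply_left hcompl.symm
  have hsub : ∀ x : X, x - (π x : X) ∈ K := by
    intro x
    have h0 : π (x - (π x : X)) = 0 := by rw [map_sub, hπR (π x), sub_self]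
    exact (Submodule.linearProjOfIsCompl_apply_eq_zero_iff hcompl.symm).mp h0
  have hge : ∀ w : R, g w = e w := fun w => rfl
  have hfs : ∀ x : X, f (s x) = (π x : X) := by
    intro x
    rw [hsx]
    have h0 : f ((e.symm (π x) : R) : X) = ((g (e.symm (π x)) : R) : X) :=
      (LinearMap.restrict_coe_apply f hfR _).symm
    rw [h0, hge, e.apply_symm_apply]
  have hfK : ∀ w ∈ K, f w ∈ K := by
    intro w hw
    rw [LinearMap.mem_ker, ← Module.End.mul_apply, ← pow_succ, pow_succ', Module.End.mul_apply,
      LinearMap.mem_ker.mp hw, map_zero]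
  have hπf : ∀ x : X, π (f x) = g (π x) := by
    intro x
    have hx : f x = f (x - (π x : X)) + f ((π x : X)) := by rw [← map_add]; congr 1; abel
    rw [hx, map_add, Submodule.linearProjOfIsCompl_apply_right' hcompl.symm
      (hfK _ (hsub x)), zero_add]
    have h0 : f ((π x : R) : X) = ((g (π x) : R) : X) :=
      (LinearMap.restrict_coe_apply f hfR _).symm
    rw [h0, hπR]
  have hsf : ∀ x : X, s (f x) = (π x : X) := by
    intro x
    rw [hsx, hπf, hge, e.symm_apply_apply]
  refine ⟨s, ?_, ?_, ?_⟩
  · apply LinearMap.ext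
    intro x
    show (f ^ k) (s (f x)) = (f ^ k) x
    rw [hsf]
    have h0 : (f ^ k) (x - (π x : X)) = 0 := LinearMap.mem_ker.mp (hsub x)
    rw [map_sub] at h0
    rw [sub_eq_zero] at h0
    exact h0.symm
  · apply LinearMap.ext
    intro x
    show s (f (s x)) = s x
    rw [hfs, hsx, hsx, hπR]
  · apply LinearMap.ext
    intro x
    show f (s x) = s (f x)
    rw [hfs, hsf]

end Construct

theorem stmt17 {X : Type*} [AddCommGroup X] [Module ℝ X]
    (c : ℝ) (hc : c ≠ 0) (f : Module.End ℝ X)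
    (T : Module.End ℝ (sym2Space X))
    (hT : ∀ x : X, ((T (sq2 x) : sym2Space X) : X ⊗[ℝ] X) = c • (f x ⊗ₜ[ℝ] f x))
    (k : ℕ) (hDrazin : ∃ S, DrazinTriple T S k) :
    (∃ s, DrazinTriple f s k) ∧
    (∀ S, DrazinTriple T S k → ∀ s k', DrazinTriple f s k' →
      ∀ x : X, ((S (sq2 x) : sym2Space X) : X ⊗[ℝ] X) = c⁻¹ • (s x ⊗ₜ[ℝ] s x)) ∧
    ((∀ A : sym2Space X, IsDecomp A → IsDecomp (T A)) →
      ∀ S, DrazinTriple T S k → ∀ A : sym2Space X, IsDecomp A → IsDecomp (S A)) := by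
  classical
  obtain ⟨S₀, hS₀⟩ := hDrazin
  obtain ⟨hd1, hd2, hd3⟩ := hS₀
  -- T on sq2
  have hT' : ∀ x : X, T (sq2 x) = c • sq2 (f x) := by
    intro x
    apply Subtype.ext
    rw [hT x]
    rfl
  have hTn : ∀ (n : ℕ) (x : X), (T ^ n) (sq2 x) = (c ^ n) • sq2 ((f ^ n) x) := by
    intro n
    induction n with
    | zero => intro x; simp
    | succ n ih =>
        intro x
        have hx : (f ^ (n + 1)) x = (f ^ n) (f x) := by rw [pow_succ, Module.End.mul_apply]
        rw [pow_succ, Module.End.mul_apply, hT' x, map_smul, ih (f x), smul_smul, ← pow_succ', hx]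
  -- operator identities from the Drazin triple of T
  have hcomTS : Commute T S₀ := hd3
  have hTS : T ^ (k + 1) * S₀ = T ^ k := by
    calc T ^ (k + 1) * S₀ = T ^ k * (T * S₀) := by rw [pow_succ, mul_assoc]
    _ = T ^ k * (S₀ * T) := by rw [hd3]
    _ = T ^ k * S₀ * T := by rw [mul_assoc]
    _ = T ^ k := hd1
  have hST : S₀ * T ^ (k + 1) = T ^ k := by
    calc S₀ * T ^ (k + 1) = (S₀ * T ^ k) * T := by rw [pow_succ, mul_assoc]
    _ = (T ^ k * S₀) * T := by rw [(hcomTS.pow_left k).eq]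
    _ = T ^ k := hd1
  -- kernel transfer
  have hker1 : ∀ x : X, (f ^ (k + 1)) x = 0 → (f ^ k) x = 0 := by
    intro x hx
    have h0 : (T ^ (k + 1)) (sq2 x) = 0 := by
      rw [hTn, hx, sq2_zero, smul_zero]
    have h4 : (T ^ k) (sq2 x) = 0 := by
      have h5 : (S₀ * T ^ (k + 1)) (sq2 x) = (T ^ k) (sq2 x) := by rw [hST]
      rw [Module.End.mul_apply, h0, map_zero] at h5
      exact h5.symm
    rw [hTn] at h4
    have h5 : sq2 ((f ^ k) x) = 0 :=
      (smul_eq_zero.mp h4).resolve_left (pow_ne_zero _ hc)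
    exact tmul_self_eq_zero (congrArg Subtype.val h5)
  -- range transfer
  have hrange1 : ∀ x : X, ∃ y, (f ^ (k + 1)) y = (f ^ k) x := by
    intro x
    set W := LinearMap.range (f ^ (k + 1)) with hW
    obtain ⟨W', hW'⟩ := Submodule.exists_isCompl W
    set π : X →ₗ[ℝ] X := W'.subtype ∘ₗ Submodule.projectionOnto W' W hW'.symm with hπdef
    have hπW : ∀ w ∈ W, π w = 0 := by
      intro w hw
      show W'.subtype (Submodule.projectionOnto W' W hW'.symm w) = 0
      rw [Submodule.linearProjOfIsCompl_apply_right' hW'.symm hw]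
      rfl
    have hπker : ∀ y : X, π y = 0 → y ∈ W := by
      intro y hy
      have h0 : Submodule.projectionOnto W' W hW'.symm y = 0 := by
        apply Subtype.ext
        exact hy
      exact (Submodule.linearProjOfIsCompl_apply_eq_zero_iff hW'.symm).mp h0
    set Φ : X ⊗[ℝ] X →ₗ[ℝ] X ⊗[ℝ] X := TensorProduct.map π π with hΦdef
    have keyL : Φ ∘ₗ (sym2Space X).subtype ∘ₗ (T ^ (k + 1) : Module.End ℝ (sym2Space X))
        = 0 := by
      apply LinearMap.ext_on (span_sq2 (X := X))
      rintro _ ⟨z, rfl⟩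
      show Φ ((((T ^ (k + 1)) (sq2 z) : sym2Space X)) : X ⊗[ℝ] X) = 0
      rw [hTn]
      show Φ ((c ^ (k + 1)) • (((f ^ (k + 1)) z) ⊗ₜ[ℝ] ((f ^ (k + 1)) z))) = 0
      rw [map_smul, TensorProduct.map_tmul, hπW _ ⟨z, rfl⟩, TensorProduct.zero_tmul, smul_zero]
    have hx : (T ^ k) (sq2 x) = (T ^ (k + 1)) (S₀ (sq2 x)) := by
      conv_lhs => rw [← hTS]
      rw [Module.End.mul_apply]
    have h0 : Φ (((T ^ k) (sq2 x) : sym2Space X) : X ⊗[ℝ] X) = 0 := by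
      rw [hx]
      exact LinearMap.ext_iff.mp keyL (S₀ (sq2 x))
    rw [hTn] at h0
    have h6 : π ((f ^ k) x) ⊗ₜ[ℝ] π ((f ^ k) x) = 0 := by
      have h7 : Φ ((c ^ k) • (((f ^ k) x) ⊗ₜ[ℝ] ((f ^ k) x))) = 0 := h0
      rw [map_smul, TensorProduct.map_tmul] at h7
      exact (smul_eq_zero.mp h7).resolve_left (pow_ne_zero _ hc)
    exact hπker _ (tmul_self_eq_zero h6)
  -- part 1: construct the Drazin inverse of f
  obtain ⟨s₀, hs₀⟩ := drazin_of_stable f k hker1 hrange1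
  -- part 2
  have part2 : ∀ S, DrazinTriple T S k → ∀ s k', DrazinTriple f s k' →
      ∀ x : X, ((S (sq2 x) : sym2Space X) : X ⊗[ℝ] X) = c⁻¹ • (s x ⊗ₜ[ℝ] s x) := by
    intro S hS s k' hs x
    obtain ⟨hs1, hs2, hs3⟩ := hs
    obtain ⟨hS1, hS2, hS3⟩ := hS
    have hpres : ∀ t ∈ sym2Space X, (c⁻¹ • TensorProduct.map s s) t ∈ sym2Space X := by
      intro t ht
      have hcm : (TensorProduct.comm ℝ X X).toLinearMap ∘ₗ TensorProduct.map s s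
          = TensorProduct.map s s ∘ₗ (TensorProduct.comm ℝ X X).toLinearMap := by
        apply TensorProduct.ext'
        intro a b
        simp
      have ht' : (TensorProduct.comm ℝ X X).toLinearMap t = t := ht
      have h0 : (TensorProduct.comm ℝ X X).toLinearMap ((TensorProduct.map s s) t)
          = (TensorProduct.map s s) t := by
        have := LinearMap.ext_iff.mp hcm t
        rw [LinearMap.comp_apply, LinearMap.comp_apply] at this
        rw [this, ht']
      show (TensorProduct.comm ℝ X X).toLinearMap ((c⁻¹ • TensorProduct.map s s) t)
          = LinearMap.id ((c⁻¹ • TensorProduct.map s s) t)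
      rw [LinearMap.smul_apply, map_smul, h0]
      rfl
    set S' : Module.End ℝ (sym2Space X) := (c⁻¹ • TensorProduct.map s s).restrict hpres
      with hS'def
    have hS'sq : ∀ y : X, S' (sq2 y) = c⁻¹ • sq2 (s y) := by
      intro y
      apply Subtype.ext
      rw [Submodule.coe_smul]
      show (c⁻¹ • TensorProduct.map s s) (y ⊗ₜ[ℝ] y) = c⁻¹ • (s y ⊗ₜ[ℝ] s y)
      rw [LinearMap.smul_apply, TensorProduct.map_tmul]
    have hfm : f ^ (k + k') * s * f = f ^ (k + k') := by
      rw [pow_add, mul_assoc (f ^ k) (f ^ k') s, mul_assoc (f ^ k) (f ^ k' * s) f, hs1]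
    have htrip : DrazinTriple T S' (k + k') := by
      refine ⟨?_, ?_, ?_⟩
      · apply LinearMap.ext_on (span_sq2 (X := X))
        rintro _ ⟨y, rfl⟩
        have harg : (f ^ (k + k')) (s (f y)) = (f ^ (k + k')) y := by
          calc (f ^ (k + k')) (s (f y)) = (f ^ (k + k') * s * f) y := rfl
          _ = (f ^ (k + k')) y := by rw [hfm]
        rw [Module.End.mul_apply, Module.End.mul_apply, hT' y, map_smul, hS'sq (f y), smul_smul,
          mul_inv_cancel₀ hc, one_smul, hTn, harg, hTn]
      · apply LinearMap.ext_on (span_sq2 (X := X))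
        rintro _ ⟨y, rfl⟩
        have harg : s (f (s y)) = s y := by
          calc s (f (s y)) = (s * f * s) y := rfl
          _ = s y := by rw [hs2]
        rw [Module.End.mul_apply, Module.End.mul_apply, hS'sq y, map_smul, hT' (s y), map_smul,
          map_smul, hS'sq (f (s y)), smul_smul, smul_smul,
          show c⁻¹ * c * c⁻¹ = c⁻¹ by field_simp, harg]
      · apply LinearMap.ext_on (span_sq2 (X := X))
        rintro _ ⟨y, rfl⟩
        have harg : f (s y) = s (f y) := by
          calc f (s y) = (f * s) y := rfl
          _ = (s * f) y := by rw [hs3]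
          _ = s (f y) := rfl
        rw [Module.End.mul_apply, Module.End.mul_apply, hS'sq y, map_smul, hT' (s y), hT' y,
          map_smul, hS'sq (f y), smul_smul, smul_smul, mul_inv_cancel₀ hc, inv_mul_cancel₀ hc,
          one_smul, one_smul, harg]
    have hSS' : S = S' :=
      drazin_unique_monoid hS1 hS2 hS3 htrip.1 htrip.2.1 htrip.2.2
    rw [hSS', hS'sq x, Submodule.coe_smul]
    rfl
  refine ⟨⟨s₀, hs₀⟩, part2, ?_⟩
  intro _ S hS A hA
  obtain ⟨x, l, hAx⟩ := hA
  have hA2 : A = l • sq2 x := Subtype.ext (by rw [hAx]; rfl)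
  refine ⟨s₀ x, l * c⁻¹, ?_⟩
  rw [hA2, map_smul, Submodule.coe_smul, part2 S hS s₀ k hs₀ x, smul_smul]
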